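/- Under the Möbius substitution z = (1 - νu)/(1 - u), the ASEP-type scattering factor S(z_i, z_j) = -(α + βz_i + γz_i z_j - z_i)/(α + βz_j + γz_i z_j - z_j) with α = ν(1-q)/(1-qν), β = (q-ν)/(1-qν), γ = (1-q)/(1-qν) transforms into S(u_i, u_j) = (q u_j - u_i)/(u_j - q u_i). -/

import Mathlib

/-- Under the Möbius substitution `z = (1-νu)/(1-u)`, the ASEP-type scattering factor
`S(z_i,z_j) = -(α + βz_i + γz_iz_j - z_j)/(α + βz_j + γz_iz_j - z_i)` with
`α = ν(1-q)/(1-qν)`, `β = (q-ν)/(1-qν)`, `γ = (1-q)/(1-qν)` transforms into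
`S(u_i,u_j) = (q u_j - u_i)/(u_j - q u_i)`. -/
theorem smatrix_transformation (q ν ui uj zi zj : ℂ) (hqν : 1 - q * ν ≠ 0)
    (hui : ui ≠ 1) (huj : uj ≠ 1)
    (hzi : zi = (1 - ν * ui) / (1 - ui)) (hzj : zj = (1 - ν * uj) / (1 - uj))
    (hden : ν * (1 - q) / (1 - q * ν) + ((q - ν) / (1 - q * ν)) * zj
        + ((1 - q) / (1 - q * ν)) * zi * zj - zi ≠ 0)
    (hdenu : uj - q * ui ≠ 0) :
    -(ν * (1 - q) / (1 - q * ν) + ((q - ν) / (1 - q * ν)) * zi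
        + ((1 - q) / (1 - q * ν)) * zi * zj - zj) /
      (ν * (1 - q) / (1 - q * ν) + ((q - ν) / (1 - q * ν)) * zj
        + ((1 - q) / (1 - q * ν)) * zi * zj - zi)
    = (q * uj - ui) / (uj - q * ui) := by
  have h1 : (1 : ℂ) - ui ≠ 0 := by
    intro h; apply hui; linear_combination -h
  have h2 : (1 : ℂ) - uj ≠ 0 := by
    intro h; apply huj; linear_combination -h
  subst hzi hzj
  rw [div_eq_div_iff hden hdenu]
  have h3 : (1 : ℂ) - ν * q ≠ 0 := by rwa [mul_comm]
  field_simp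
  ring
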